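/- arXiv:1309.0330 — 2 statements merged into one kernel-verified Lean document; each statement's English description precedes it below -/
import Mathlib

section
/- The number of Gelfand-Tsetlin patterns with top row a given partition λ = (λ_1, …, λ_{n+1}) equals the product over 1 ≤ i < j ≤ n+1 of (λ_i − λ_j + j − i)/(j − i), i.e. equals the dimension of the irreducible gl_{n+1}-representation of highest weight λ given by the Weyl dimension formula. -/
/-- A Gelfand-Tsetlin pattern with top row `top` (a sequence of `m+1` nonnegative integers):
rows `rows j` for `j : Fin (m+1)`, where row `j` has `j+1` parts, each row is weakly
decreasing, consecutive rows interlace, and the top row equals `top`. -/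
structure GTPattern (m : ℕ) (top : Fin (m+1) → ℕ) where
  rows : (j : Fin (m+1)) → Fin (j.val + 1) → ℕ
  antitone : ∀ (j : Fin (m+1)) (a b : Fin (j.val + 1)), a ≤ b → rows j b ≤ rows j a
  interlace : ∀ (j : Fin m) (i : Fin (j.val + 1)),
    rows ⟨j.val + 1, Nat.succ_lt_succ j.isLt⟩ ⟨i.val + 1, Nat.succ_lt_succ i.isLt⟩
        ≤ rows ⟨j.val, Nat.lt_succ_of_lt j.isLt⟩ i ∧
      rows ⟨j.val, Nat.lt_succ_of_lt j.isLt⟩ i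
        ≤ rows ⟨j.val + 1, Nat.succ_lt_succ j.isLt⟩ ⟨i.val, Nat.lt_succ_of_lt i.isLt⟩
  top_eq : ∀ i : Fin (m+1), rows (Fin.last m) ⟨i.val, i.isLt⟩ = top i

open Finset Matrix

namespace AuxGT

/-- `∏_{i<j} (z i - z j)`. -/
def VV {k : ℕ} (z : Fin k → ℚ) : ℚ :=
  ∏ j : Fin k, ∏ i : Fin k, if i < j then (z i - z j) else 1

lemma VV_alt {k : ℕ} (z : Fin k → ℚ) :
    VV z = ∏ i : Fin k, ∏ j ∈ Ioi i, (z i - z j) := by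
  rw [VV, Finset.prod_comm]
  refine Finset.prod_congr rfl fun i _ => ?_
  rw [← Finset.prod_filter]
  congr 1
  ext a
  simp

lemma det_vandermonde_eq_VV {k : ℕ} (z : Fin k → ℚ) :
    det (vandermonde z) = (-1) ^ k.choose 2 * VV z := by
  rw [det_vandermonde, VV_alt]
  have h1 : ∀ i : Fin k, ∏ j ∈ Ioi i, (z j - z i)
      = (-1) ^ (Ioi i).card * ∏ j ∈ Ioi i, (z i - z j) := by
    intro i
    rw [← Finset.prod_const, ← Finset.prod_mul_distrib]
    exact Finset.prod_congr rfl fun j _ => by ring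
  rw [Finset.prod_congr rfl fun i _ => h1 i, Finset.prod_mul_distrib,
    Finset.prod_pow_eq_pow_sum]
  congr 2
  have : ∀ i : Fin k, (Ioi i).card = k - 1 - i.val := fun i => Fin.card_Ioi i
  rw [Finset.sum_congr rfl fun i _ => this i]
  rw [Fin.sum_univ_eq_sum_range (fun t => k - 1 - t) k, Finset.sum_range_reflect (fun t => t) k]
  · rw [Nat.choose_two_right]
    have := Finset.sum_range_id_mul_two k
    omega

/-- Power sum `∑_{k<n} k^p` as a rational. -/
def S (p n : ℕ) : ℚ := ∑ k ∈ range n, (k : ℚ) ^ p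

/-- Faulhaber coefficients. -/
def d (p m : ℕ) : ℚ := bernoulli (p - m) * ((p+1).choose (p - m)) / (p + 1)

lemma d_diag (p : ℕ) : d p p = 1 / (p + 1) := by
  simp [d]

lemma S_eq (p n : ℕ) : S p n = ∑ m ∈ range (p+1), d p m * (n : ℚ) ^ (m+1) := by
  rw [S, _root_.sum_range_pow n p, ← Finset.sum_range_reflect]
  refine Finset.sum_congr rfl fun m hm => ?_
  rw [Finset.mem_range] at hm
  have h1 : p + 1 - (p - m) = m + 1 := by omega
  have h2 : p + 1 - 1 - m = p - m := by omega
  rw [h2, h1, d]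
  ring

lemma sum_Ico_pow {a b : ℕ} (h : a ≤ b) (p : ℕ) :
    ∑ k ∈ Ico a b, (k : ℚ) ^ p = S p b - S p a := by
  rw [S, S, ← Finset.sum_Ico_eq_sub _ h]

lemma nat_telescope (G : ℕ → ℚ) {a b : ℕ} (h : a ≤ b) :
    ∑ t ∈ Ico a b, (G t - G (t+1)) = G a - G b := by
  rw [Finset.sum_Ico_eq_sub _ h, Finset.sum_range_sub' G, Finset.sum_range_sub' G]
  ring

lemma fin_telescope {N : ℕ} (g : Fin (N+1) → ℚ) (i : Fin N) :
    ∑ k : Fin N, (if i ≤ k then (g k.castSucc - g k.succ) else 0)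
      = g i.castSucc - g (Fin.last N) := by
  classical
  set G : ℕ → ℚ := fun t => if h : t ≤ N then g ⟨t, Nat.lt_succ_of_le h⟩ else 0 with hG
  have hcs : ∀ k : Fin N, g k.castSucc = G k.val := by
    intro k
    simp only [hG, dif_pos (le_of_lt k.isLt)]
    congr 1
  have hsc : ∀ k : Fin N, g k.succ = G (k.val + 1) := by
    intro k
    simp only [hG, dif_pos (Nat.succ_le_of_lt k.isLt)]
    congr 1
  calc ∑ k : Fin N, (if i ≤ k then (g k.castSucc - g k.succ) else 0)
      = ∑ t ∈ range N, (if i.val ≤ t then (G t - G (t+1)) else 0) := by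
        rw [← Fin.sum_univ_eq_sum_range (fun t => if i.val ≤ t then (G t - G (t+1)) else 0) N]
        refine Finset.sum_congr rfl fun k _ => ?_
        rw [hcs, hsc]
        rfl
    _ = ∑ t ∈ Ico i.val N, (G t - G (t+1)) := by
        rw [← Finset.sum_filter]
        congr 1
        ext a
        simp [Finset.mem_filter, Finset.mem_Ico]
        omega
    _ = G i.val - G N := nat_telescope G (le_of_lt i.isLt)
    _ = g i.castSucc - g (Fin.last N) := by
        rw [hcs]
        simp only [hG, dif_pos (le_refl N)]
        rfl

lemma VV_eq_det {k : ℕ} (z : Fin k → ℚ) :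
    VV z = (-1) ^ k.choose 2 * det (vandermonde z) := by
  rw [det_vandermonde_eq_VV, ← mul_assoc, ← pow_add]
  rw [Even.neg_one_pow ⟨k.choose 2, by ring⟩, one_mul]

theorem key (N : ℕ) (x : Fin (N+1) → ℕ) (hx : ∀ i : Fin N, x i.succ ≤ x i.castSucc) :
    (∑ y ∈ Fintype.piFinset (fun i : Fin N => Finset.Ico (x i.succ) (x i.castSucc)),
      VV (fun i => (y i : ℚ))) * (Nat.factorial N : ℚ) = VV (fun i => (x i : ℚ)) := by
  classical
  set M : Matrix (Fin N) (Fin N) ℚ :=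
    Matrix.of fun i j => S j.val (x i.castSucc) - S j.val (x i.succ) with hM
  set P : Matrix (Fin N) (Fin N) ℚ :=
    Matrix.of fun i m => (x i.castSucc : ℚ) ^ (m.val+1) - (x (Fin.last N) : ℚ) ^ (m.val+1) with hP
  set C : Matrix (Fin N) (Fin N) ℚ :=
    Matrix.of fun m p => if m ≤ p then d p.val m.val else 0 with hC
  set T : Matrix (Fin N) (Fin N) ℚ := Matrix.of fun i k => if i ≤ k then 1 else 0 with hT
  -- Step B : summing the Vandermonde determinants over the box
  have hB : ∑ y ∈ Fintype.piFinset (fun i : Fin N => Finset.Ico (x i.succ) (x i.castSucc)),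
      det (vandermonde (fun i => ((y i : ℕ) : ℚ))) = det M := by
    have h0 := (Matrix.detRowAlternating (R := ℚ) (n := Fin N)).toMultilinearMap.map_sum_finset
      (g := fun (i : Fin N) (t : ℕ) => fun j : Fin N => (t : ℚ) ^ (j : ℕ))
      (A := fun i : Fin N => Finset.Ico (x i.succ) (x i.castSucc))
    have h1 : (fun i : Fin N => ∑ t ∈ Finset.Ico (x i.succ) (x i.castSucc),
        (fun j : Fin N => (t : ℚ) ^ (j : ℕ))) = M := by
      funext i j
      rw [Finset.sum_apply, hM]
      exact sum_Ico_pow (hx i) j.val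
    rw [h1] at h0
    exact h0.symm
  -- Step C : det T = 1
  have hTtri : T.BlockTriangular id := by
    intro i j h
    simp only [hT, Matrix.of_apply]
    exact if_neg (not_le.mpr h)
  have hdetT : det T = 1 := by
    rw [Matrix.det_of_upperTriangular hTtri]
    simp [hT]
  -- Step D : T * M = P * C
  have hTM : ∀ (i j : Fin N), (T * M) i j
      = S j.val (x i.castSucc) - S j.val (x (Fin.last N)) := by
    intro i j
    rw [Matrix.mul_apply]
    have h2 : ∀ k : Fin N, T i k * M k j
        = if i ≤ k then ((fun k : Fin (N+1) => S j.val (x k)) k.castSucc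
            - (fun k : Fin (N+1) => S j.val (x k)) k.succ) else 0 := by
      intro k
      simp only [hT, hM, Matrix.of_apply]
      split_ifs <;> ring
    rw [Finset.sum_congr rfl fun k _ => h2 k]
    exact fin_telescope (fun k : Fin (N+1) => S j.val (x k)) i
  have hPC : ∀ (i p : Fin N), (P * C) i p
      = S p.val (x i.castSucc) - S p.val (x (Fin.last N)) := by
    intro i p
    rw [Matrix.mul_apply]
    have h2 : ∀ m : Fin N, P i m * C m p
        = if m.val ≤ p.val then
            ((x i.castSucc : ℚ) ^ (m.val+1) - (x (Fin.last N) : ℚ) ^ (m.val+1)) * d p.val m.val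
          else 0 := by
      intro m
      simp only [hP, hC, Matrix.of_apply, Fin.le_def]
      split_ifs <;> ring
    rw [Finset.sum_congr rfl fun m _ => h2 m]
    rw [Fin.sum_univ_eq_sum_range (fun t => if t ≤ p.val then
      ((x i.castSucc : ℚ) ^ (t+1) - (x (Fin.last N) : ℚ) ^ (t+1)) * d p.val t else 0) N]
    have h3 : ∑ t ∈ range N, (if t ≤ p.val then
        ((x i.castSucc : ℚ) ^ (t+1) - (x (Fin.last N) : ℚ) ^ (t+1)) * d p.val t else 0)
        = ∑ t ∈ range (p.val + 1),
          ((x i.castSucc : ℚ) ^ (t+1) - (x (Fin.last N) : ℚ) ^ (t+1)) * d p.val t := by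
      rw [← Finset.sum_filter]
      congr 1
      ext a
      simp only [Finset.mem_filter, Finset.mem_range]
      have := p.isLt
      omega
    rw [h3]
    rw [S_eq, S_eq, ← Finset.sum_sub_distrib]
    exact Finset.sum_congr rfl fun t _ => by ring
  have hTMPC : T * M = P * C := by
    ext i j
    rw [hTM i j, hPC i j]
  -- Step E : det C * N! = 1
  have hCtri : C.BlockTriangular id := by
    intro i j h
    simp only [hC, Matrix.of_apply]
    exact if_neg (not_le.mpr h)
  have hdetC : det C * (Nat.factorial N : ℚ) = 1 := by
    rw [Matrix.det_of_upperTriangular hCtri]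
    have h4 : ∀ m : Fin N, C m m = 1 / ((m.val : ℚ) + 1) := by
      intro m
      simp only [hC, Matrix.of_apply, if_pos (le_refl m)]
      rw [d_diag]
    rw [Finset.prod_congr rfl fun m _ => h4 m]
    rw [Finset.prod_div_distrib, Finset.prod_const_one]
    rw [Fin.prod_univ_eq_prod_range (fun t => (t : ℚ) + 1) N]
    have h5 : ∏ t ∈ range N, ((t : ℚ) + 1) = (Nat.factorial N : ℚ) := by
      rw [← Finset.prod_range_add_one_eq_factorial N]
      push_cast
      rfl
    rw [h5]
    rw [one_div, inv_mul_cancel₀]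
    exact_mod_cast Nat.factorial_ne_zero N
  -- Step F : det P = (-1)^N * det (vandermonde x)
  set A : Matrix (Fin (N+1)) (Fin (N+1)) ℚ := vandermonde (fun i : Fin (N+1) => (x i : ℚ))
    with hA
  set E : Matrix (Fin (N+1)) (Fin (N+1)) ℚ :=
    Matrix.of fun i j => if i = j then 1 else if j = Fin.last N then -1 else 0 with hE
  have hEtri : E.BlockTriangular id := by
    intro i j h
    simp only [hE, Matrix.of_apply]
    rw [if_neg (by exact fun hc => absurd hc.symm (ne_of_lt h)), if_neg]
    intro hc
    subst hc
    exact absurd (Fin.le_last i) (not_le.mpr h)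
  have hdetE : det E = 1 := by
    rw [Matrix.det_of_upperTriangular hEtri]
    simp [hE]
  have hEA : ∀ (i j : Fin (N+1)), (E * A) i j
      = if i = Fin.last N then A i j else A i j - A (Fin.last N) j := by
    intro i j
    rw [Matrix.mul_apply]
    have hterm : ∀ k, E i k * A k j
        = (if k = i then A k j else 0)
          + (if i ≠ Fin.last N ∧ k = Fin.last N then -(A k j) else 0) := by
      intro k
      simp only [hE, Matrix.of_apply]
      by_cases h1 : i = k
      · subst h1
        rw [if_pos rfl, if_pos rfl]
        by_cases h2 : i = Fin.last N
        · rw [if_neg (by tauto)]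
          ring
        · rw [if_neg (by tauto)]
          ring
      · rw [if_neg h1, if_neg (fun hc : k = i => h1 hc.symm)]
        by_cases h2 : k = Fin.last N
        · subst h2
          rw [if_pos rfl]
          by_cases h3 : i = Fin.last N
          · exact absurd h3 h1
          · rw [if_pos ⟨h3, rfl⟩]
            ring
        · rw [if_neg h2, if_neg (by tauto)]
          ring
    rw [Finset.sum_congr rfl fun k _ => hterm k, Finset.sum_add_distrib]
    rw [Finset.sum_ite_eq' univ i (fun k => A k j)]
    by_cases h2 : i = Fin.last N
    · subst h2
      simp
    · have : ∀ k, (if i ≠ Fin.last N ∧ k = Fin.last N then -(A k j) else 0)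
          = (if k = Fin.last N then -(A k j) else 0) := by
        intro k
        by_cases h3 : k = Fin.last N
        · rw [if_pos ⟨h2, h3⟩, if_pos h3]
        · rw [if_neg (by tauto), if_neg h3]
      rw [Finset.sum_congr rfl fun k _ => this k,
        Finset.sum_ite_eq' univ (Fin.last N) (fun k => -(A k j))]
      simp only [Finset.mem_univ, if_true]
      rw [if_neg h2]
      ring
  have hcol0 : ∀ i : Fin (N+1), (E * A) i 0 = if i = Fin.last N then 1 else 0 := by
    intro i
    rw [hEA]
    have hA0 : ∀ k : Fin (N+1), A k 0 = 1 := by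
      intro k
      simp [hA, vandermonde_apply]
    by_cases h2 : i = Fin.last N
    · rw [if_pos h2, if_pos h2, h2, hA0]
    · rw [if_neg h2, if_neg h2, hA0, hA0]
      ring
  have hsub : (E * A).submatrix (Fin.last N).succAbove Fin.succ = P := by
    ext i m
    rw [Matrix.submatrix_apply, Fin.succAbove_last]
    rw [hEA]
    rw [if_neg (Fin.ne_of_lt (Fin.castSucc_lt_last i))]
    simp [hA, vandermonde_apply, hP]
  have hdetA : det A = (-1 : ℚ) ^ N * det P := by
    have h6 : det A = det (E * A) := by
      rw [Matrix.det_mul, hdetE, one_mul]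
    rw [h6, Matrix.det_succ_column_zero]
    rw [Finset.sum_eq_single (Fin.last N)]
    · rw [hcol0, if_pos rfl, hsub]
      simp
    · intro b _ hb
      rw [hcol0, if_neg hb]
      ring
    · intro hb
      exact absurd (Finset.mem_univ _) hb
  -- Step G : assembling everything
  have hsum : (∑ y ∈ Fintype.piFinset (fun i : Fin N => Finset.Ico (x i.succ) (x i.castSucc)),
      VV (fun i => (y i : ℚ)))
      = (-1 : ℚ) ^ N.choose 2 * det M := by
    rw [← hB, Finset.mul_sum]
    exact Finset.sum_congr rfl fun y _ => VV_eq_det _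
  have hdetM : det M = det P * det C := by
    have : det (T * M) = det (P * C) := by rw [hTMPC]
    rw [Matrix.det_mul, Matrix.det_mul, hdetT, one_mul] at this
    exact this
  have hdetP : det P = (-1 : ℚ) ^ N * det A := by
    rw [hdetA, ← mul_assoc, ← pow_add, Even.neg_one_pow ⟨N, by ring⟩, one_mul]
  have hchoose : (N+1).choose 2 = N.choose 2 + N := by
    rw [Nat.choose_succ_succ, Nat.choose_one_right, Nat.add_comm]
  rw [hsum, hdetM]
  calc (-1 : ℚ) ^ N.choose 2 * (det P * det C) * (Nat.factorial N : ℚ)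
      = (-1 : ℚ) ^ N.choose 2 * det P * (det C * (Nat.factorial N : ℚ)) := by ring
    _ = (-1 : ℚ) ^ N.choose 2 * det P := by rw [hdetC, mul_one]
    _ = (-1 : ℚ) ^ N.choose 2 * ((-1 : ℚ) ^ N * det A) := by rw [hdetP]
    _ = (-1 : ℚ) ^ (N.choose 2 + N) * det A := by rw [pow_add]; ring
    _ = (-1 : ℚ) ^ ((N+1).choose 2) * det (vandermonde (fun i => (x i : ℚ))) := by
        rw [hchoose, hA]
    _ = VV (fun i => (x i : ℚ)) := (VV_eq_det _).symm

end AuxGT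

namespace GTPattern

lemma ext' {m : ℕ} {top : Fin (m+1) → ℕ} {P Q : GTPattern m top}
    (h : P.rows = Q.rows) : P = Q := by
  cases P; cases Q; cases h; rfl

lemma head_le {m : ℕ} {top : Fin (m+1) → ℕ} (P : GTPattern m top) :
    ∀ (k j : ℕ) (hj : j + k = m), P.rows ⟨j, by omega⟩ ⟨0, Nat.succ_pos j⟩ ≤ top 0 := by
  intro k
  induction k with
  | zero =>
    intro j hj
    subst hj
    exact le_of_eq (P.top_eq ⟨0, Nat.succ_pos _⟩)
  | succ k ih =>
    intro j hj
    have h1 := (P.interlace ⟨j, by omega⟩ ⟨0, Nat.succ_pos j⟩).2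
    exact le_trans h1 (ih (j+1) (by omega))

lemma rows_le {m : ℕ} {top : Fin (m+1) → ℕ} (P : GTPattern m top)
    (j : Fin (m+1)) (i : Fin (j.val + 1)) : P.rows j i ≤ top 0 := by
  have h1 : P.rows j i ≤ P.rows j ⟨0, Nat.succ_pos _⟩ :=
    P.antitone j ⟨0, Nat.succ_pos _⟩ i (Fin.mk_le_of_le_val (Nat.zero_le _))
  exact le_trans h1 (P.head_le (m - j.val) j.val (by omega))

instance finite {m : ℕ} {top : Fin (m+1) → ℕ} : Finite (GTPattern m top) := by
  apply Finite.of_injective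
    (fun (P : GTPattern m top) =>
      (fun j i => (⟨P.rows j i, Nat.lt_succ_of_le (P.rows_le j i)⟩ : Fin (top 0 + 1)) :
        (j : Fin (m+1)) → Fin (j.val + 1) → Fin (top 0 + 1)))
  intro P Q h
  apply ext'
  funext j i
  exact congrArg Fin.val (congrFun (congrFun h j) i)

lemma card_zero (top : Fin 1 → ℕ) : Nat.card (GTPattern 0 top) = 1 := by
  have hsub : ∀ P Q : GTPattern 0 top, P = Q := by
    intro P Q
    apply ext'
    funext j i
    have hj : j = Fin.last 0 := Fin.ext (by omega)
    subst hj
    have hi : i = ⟨0, Nat.succ_pos _⟩ := Fin.ext (by omega)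
    subst hi
    exact (P.top_eq ⟨0, Nat.succ_pos _⟩).trans (Q.top_eq ⟨0, Nat.succ_pos _⟩).symm
  have hne : Nonempty (GTPattern 0 top) := by
    refine ⟨⟨fun _ _ => top 0, ?_, ?_, ?_⟩⟩
    · intro _ _ _ _
      exact le_refl _
    · intro j
      exact j.elim0
    · intro i
      have : i = 0 := Fin.ext (by omega)
      rw [this]
  rw [Nat.card_eq_one_iff_unique]
  exact ⟨⟨hsub⟩, hne⟩

end GTPattern

namespace GTPattern

variable {n : ℕ} {lam : Fin (n+2) → ℕ}

/-- The box of possible second rows. -/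
def box (lam : Fin (n+2) → ℕ) : Finset (Fin (n+1) → ℕ) :=
  Fintype.piFinset fun i : Fin (n+1) => Finset.Icc (lam i.succ) (lam i.castSucc)

/-- second-to-top row -/
def mu (P : GTPattern (n+1) lam) : Fin (n+1) → ℕ := P.rows ⟨n, by omega⟩

lemma mu_mem_box (P : GTPattern (n+1) lam) : P.mu ∈ box lam := by
  rw [box, Fintype.mem_piFinset]
  intro i
  rw [Finset.mem_Icc]
  have h1 := P.interlace ⟨n, by omega⟩ i
  have h2 := P.top_eq i.succ
  have h3 := P.top_eq i.castSucc
  exact ⟨le_trans (le_of_eq h2.symm) h1.1, le_trans h1.2 (le_of_eq h3)⟩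

/-- Strip the top row. -/
def down (P : GTPattern (n+1) lam) : GTPattern n P.mu where
  rows := fun j i => P.rows ⟨j.val, by omega⟩ i
  antitone := fun j a b h => P.antitone ⟨j.val, by omega⟩ a b h
  interlace := fun j i => P.interlace ⟨j.val, by omega⟩ i
  top_eq := fun i => rfl

/-- Add a new top row. -/
def up (hlam : Antitone lam) (μ : Fin (n+1) → ℕ) (hμ : μ ∈ box lam)
    (Q : GTPattern n μ) : GTPattern (n+1) lam where
  rows := fun j =>
    if h : j.val < n + 1 then (fun i => Q.rows ⟨j.val, h⟩ i)
    else (fun i => lam ⟨i.val, by omega⟩)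
  antitone := by
    intro j a b hab
    by_cases h : j.val < n + 1
    · simp only [dif_pos h]
      exact Q.antitone ⟨j.val, h⟩ a b hab
    · simp only [dif_neg h]
      exact hlam (show (⟨a.val, by omega⟩ : Fin (n+2)) ≤ ⟨b.val, by omega⟩ from hab)
  interlace := by
    intro j i
    by_cases h : j.val + 1 < n + 1
    · simp only [dif_pos h, dif_pos (show j.val < n + 1 by omega)]
      exact Q.interlace ⟨j.val, by omega⟩ i
    · have hj : j.val = n := by omega
      simp only [dif_neg h, dif_pos (show j.val < n + 1 by omega)]
      have hi : i.val < n + 1 := by omega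
      have hQ : Q.rows ⟨j.val, by omega⟩ i = μ ⟨i.val, hi⟩ := by
        rw [← Q.top_eq ⟨i.val, hi⟩]
        congr 1
        · exact Fin.ext hj
        · rw [Fin.heq_ext_iff (by simp [Fin.val_last, hj])]
      rw [hQ]
      have hbox := (Fintype.mem_piFinset.mp hμ) ⟨i.val, hi⟩
      rw [Finset.mem_Icc] at hbox
      exact ⟨hbox.1, hbox.2⟩
  top_eq := by
    intro i
    simp only [dif_neg (show ¬ ((Fin.last (n+1)).val < n + 1) by simp)]

lemma heq_of_rows {μ1 μ2 : Fin (n+1) → ℕ} (h : μ1 = μ2)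
    (P : GTPattern n μ1) (Q : GTPattern n μ2) (hr : P.rows = Q.rows) : HEq P Q := by
  subst h
  rw [ext' hr]

lemma card_rec (hlam : Antitone lam) :
    Nat.card (GTPattern (n+1) lam) = ∑ μ ∈ box lam, Nat.card (GTPattern n μ) := by
  classical
  set F : GTPattern (n+1) lam → Σ s : (box lam : Finset _), GTPattern n s.val :=
    fun P => ⟨⟨P.mu, P.mu_mem_box⟩, P.down⟩ with hF
  have hbij : Function.Bijective F := by
    constructor
    · intro P1 P2 h
      have hmu : P1.mu = P2.mu := congrArg (fun s => (s.1 : Fin (n+1) → ℕ)) h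
      have hflat : (fun (j : Fin (n+1)) (i : Fin (j.val + 1)) =>
            P1.rows ⟨j.val, by omega⟩ i)
          = (fun (j : Fin (n+1)) (i : Fin (j.val + 1)) => P2.rows ⟨j.val, by omega⟩ i) :=
        congrArg (fun s : Σ s : (box lam : Finset _), GTPattern n s.val => s.2.rows) h
      apply ext'
      funext j i
      by_cases hj : j.val < n + 1
      · have := congrFun (congrFun hflat ⟨j.val, hj⟩) i
        simpa using this
      · have hj2 : j = Fin.last (n+1) := Fin.ext (by rw [Fin.val_last]; omega)
        subst hj2
        have hi : i = ⟨(⟨i.val, i.isLt⟩ : Fin (n+2)).val, (⟨i.val, i.isLt⟩ : Fin (n+2)).isLt⟩ :=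
          Fin.ext rfl
        rw [hi, P1.top_eq ⟨i.val, i.isLt⟩, P2.top_eq ⟨i.val, i.isLt⟩]
    · rintro ⟨⟨μ, hμ⟩, Q⟩
      refine ⟨up hlam μ hμ Q, ?_⟩
      have hmu : (up hlam μ hμ Q).mu = μ := by
        funext i
        show (up hlam μ hμ Q).rows ⟨n, by omega⟩ i = μ i
        simp only [up, dif_pos (show n < n + 1 by omega)]
        exact Q.top_eq i
      refine Sigma.ext (Subtype.ext hmu) ?_
      show HEq (up hlam μ hμ Q).down Q
      refine heq_of_rows hmu _ Q ?_
      funext j i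
      show (up hlam μ hμ Q).rows ⟨j.val, by omega⟩ i = Q.rows j i
      simp only [up, dif_pos (show j.val < n + 1 from j.isLt)]
  haveI : ∀ s : (box lam : Finset _), Fintype (GTPattern n s.val) :=
    fun s => Fintype.ofFinite _
  haveI : Fintype (GTPattern (n+1) lam) := Fintype.ofFinite _
  rw [Nat.card_congr (Equiv.ofBijective F hbij)]
  rw [Nat.card_eq_fintype_card, Fintype.card_sigma]
  rw [← Finset.sum_coe_sort (box lam) (fun μ => Nat.card (GTPattern n μ))]
  exact Finset.sum_congr rfl fun s _ => (Nat.card_eq_fintype_card).symm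

end GTPattern

namespace AuxGT

/-! ### The Weyl dimension product -/

def Wey {k : ℕ} (ν : Fin k → ℕ) : ℚ :=
  ∏ j : Fin k, ∏ i : Fin k,
    if i < j then ((ν i : ℚ) - ν j + j.val - i.val) / ((j.val : ℚ) - i.val) else 1

def Dden (k : ℕ) : ℚ :=
  ∏ j : Fin k, ∏ i : Fin k, if i < j then ((j.val : ℚ) - i.val) else 1

def xof {k : ℕ} (ν : Fin (k+1) → ℕ) : Fin (k+1) → ℕ := fun i => ν i + (k - i.val)

lemma Dden_pos (k : ℕ) : 0 < Dden k := by
  apply Finset.prod_pos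
  intro j _
  apply Finset.prod_pos
  intro i _
  by_cases h : i < j
  · rw [if_pos h]
    have : i.val < j.val := h
    have h1 : (i.val : ℚ) < (j.val : ℚ) := by exact_mod_cast this
    linarith
  · rw [if_neg h]
    norm_num

lemma Wey_mul_Dden {k : ℕ} (ν : Fin (k+1) → ℕ) :
    Wey ν * Dden (k+1) = VV (fun i => (xof ν i : ℚ)) := by
  rw [Wey, Dden, VV, ← Finset.prod_mul_distrib]
  refine Finset.prod_congr rfl fun j _ => ?_
  rw [← Finset.prod_mul_distrib]
  refine Finset.prod_congr rfl fun i _ => ?_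
  by_cases h : i < j
  · rw [if_pos h, if_pos h, if_pos h]
    have hij : i.val < j.val := h
    have hne : ((j.val : ℚ) - i.val) ≠ 0 := by
      have h1 : (i.val : ℚ) < (j.val : ℚ) := by exact_mod_cast hij
      linarith
    rw [div_mul_cancel₀ _ hne]
    rw [xof, xof]
    have hi : i.val ≤ k := by omega
    have hj : j.val ≤ k := by have := j.isLt; omega
    push_cast [Nat.cast_sub hi, Nat.cast_sub hj]
    ring
  · rw [if_neg h, if_neg h, if_neg h, mul_one]

lemma Dden_succ (k : ℕ) : Dden (k+1) = Dden k * (Nat.factorial k : ℚ) := by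
  rw [Dden, Fin.prod_univ_castSucc]
  congr 1
  · rw [Dden]
    refine Finset.prod_congr rfl fun j _ => ?_
    rw [Fin.prod_univ_castSucc]
    rw [if_neg (not_lt.mpr (Fin.le_last _)), mul_one]
    refine Finset.prod_congr rfl fun i _ => ?_
    simp [Fin.castSucc_lt_castSucc_iff, Fin.coe_castSucc]
  · rw [Fin.prod_univ_castSucc]
    rw [if_neg (lt_irrefl _), mul_one]
    have h1 : ∀ i : Fin k, (if (Fin.castSucc i) < Fin.last k
        then (((Fin.last k).val : ℚ) - (Fin.castSucc i).val) else 1)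
        = (((k - i.val : ℕ)) : ℚ) := by
      intro i
      rw [if_pos (Fin.castSucc_lt_last i)]
      rw [Fin.val_last, Fin.coe_castSucc]
      rw [Nat.cast_sub (le_of_lt i.isLt)]
    rw [Finset.prod_congr rfl fun i _ => h1 i]
    rw [Fin.prod_univ_eq_prod_range (fun t => ((k - t : ℕ) : ℚ)) k]
    rw [← Nat.cast_prod]
    congr 1
    rw [← Finset.prod_range_reflect (fun t => k - t) k]
    rw [← Finset.prod_range_add_one_eq_factorial k]
    refine Finset.prod_congr rfl fun t ht => ?_
    rw [Finset.mem_range] at ht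
    omega

lemma box_antitone {n : ℕ} {lam : Fin (n+2) → ℕ} (hlam : Antitone lam) {μ : Fin (n+1) → ℕ}
    (hμ : μ ∈ GTPattern.box lam) : Antitone μ := by
  rw [Fin.antitone_iff_succ_le]
  intro i
  have ha := (Finset.mem_Icc.mp ((Fintype.mem_piFinset.mp hμ) i.succ)).2
  have hb := (Finset.mem_Icc.mp ((Fintype.mem_piFinset.mp hμ) i.castSucc)).1
  have hc : (i.succ).castSucc = (i.castSucc).succ := rfl
  exact le_trans ha (le_trans (le_of_eq (congrArg lam hc)) hb)

lemma box_sum (n : ℕ) (lam : Fin (n+2) → ℕ) :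
    ∑ μ ∈ GTPattern.box lam, VV (fun i => (xof μ i : ℚ))
      = ∑ y ∈ Fintype.piFinset (fun i : Fin (n+1) =>
          Finset.Ico (xof lam i.succ) (xof lam i.castSucc)), VV (fun i => (y i : ℚ)) := by
  apply Finset.sum_nbij' (i := fun μ => fun i : Fin (n+1) => μ i + (n - i.val))
    (j := fun y => fun i : Fin (n+1) => y i - (n - i.val))
  · intro μ hμ
    rw [GTPattern.box, Fintype.mem_piFinset] at hμ
    rw [Fintype.mem_piFinset]
    intro i
    have h1 := Finset.mem_Icc.mp (hμ i)
    rw [Finset.mem_Ico]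
    simp only [xof, Fin.val_succ, Fin.coe_castSucc] at h1 ⊢
    have := i.isLt
    omega
  · intro y hy
    rw [Fintype.mem_piFinset] at hy
    rw [GTPattern.box, Fintype.mem_piFinset]
    intro i
    have h1 := Finset.mem_Ico.mp (hy i)
    rw [Finset.mem_Icc]
    simp only [xof, Fin.val_succ, Fin.coe_castSucc] at h1 ⊢
    have := i.isLt
    omega
  · intro μ hμ
    funext i
    simp only []
    omega
  · intro y hy
    rw [Fintype.mem_piFinset] at hy
    funext i
    have h1 := Finset.mem_Ico.mp (hy i)
    simp only [xof, Fin.val_succ, Fin.coe_castSucc] at h1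
    show y i - (n - i.val) + (n - i.val) = y i
    omega
  · intro μ hμ
    congr 1

lemma Wey_rec (n : ℕ) (lam : Fin (n+2) → ℕ) (hlam : Antitone lam) :
    ∑ μ ∈ GTPattern.box lam, Wey μ = Wey lam := by
  have hx : ∀ i : Fin (n+1), xof lam i.succ ≤ xof lam i.castSucc := by
    intro i
    have h1 : lam i.succ ≤ lam i.castSucc := hlam (Fin.castSucc_le_succ i)
    simp only [xof, Fin.val_succ, Fin.coe_castSucc]
    have := i.isLt
    omega
  have hkey := key (n+1) (xof lam) hx
  rw [← box_sum n lam] at hkey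
  have h2 : ∀ μ : Fin (n+1) → ℕ, VV (fun i => (xof μ i : ℚ)) = Wey μ * Dden (n+1) :=
    fun μ => (Wey_mul_Dden μ).symm
  rw [Finset.sum_congr rfl fun μ _ => h2 μ, ← Finset.sum_mul] at hkey
  rw [← Wey_mul_Dden lam, Dden_succ (n+1)] at hkey
  have hden : Dden (n+1) * ((Nat.factorial (n+1) : ℕ) : ℚ) ≠ 0 := by
    apply mul_ne_zero (ne_of_gt (Dden_pos _))
    exact_mod_cast Nat.factorial_ne_zero (n+1)
  apply mul_right_cancel₀ hden
  rw [← mul_assoc]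
  exact hkey

theorem stmt_3' (n : ℕ) (lam : Fin (n+1) → ℕ) (hlam : Antitone lam) :
    (Nat.card (GTPattern n lam) : ℚ) = Wey lam := by
  induction n with
  | zero =>
    rw [GTPattern.card_zero, Wey, Nat.cast_one]
    simp
  | succ n ih =>
    rw [GTPattern.card_rec hlam, Nat.cast_sum, ← Wey_rec n lam hlam]
    exact Finset.sum_congr rfl fun μ hμ => ih μ (box_antitone hlam hμ)

end AuxGT

/-- the number of Gelfand-Tsetlin patterns with top row λ equals the Weyl
dimension formula product ∏_{i<j} (λ_i − λ_j + j − i)/(j − i). -/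
theorem stmt_3 (n : ℕ) (lam : Fin (n+1) → ℕ) (hlam : Antitone lam) :
    (Nat.card (GTPattern n lam) : ℚ) =
      ∏ j : Fin (n+1), ∏ i : Fin (n+1),
        if i < j then ((lam i : ℚ) - lam j + j.val - i.val) / ((j.val : ℚ) - i.val) else 1 :=
  AuxGT.stmt_3' n lam hlam
end

section
/- Let R^λ_2 be the cyclotomic KLR algebra of type A_1 (nilHecke case) with cyclotomic parameter m = λ̄_1, i.e. the quotient of the nilHecke algebra NH_k by the two-sided ideal generated by x_1^m. Then the idempotent 1_{m+1} consisting of m+1 parallel strands is zero in R^λ_2; equivalently, the cyclotomic nilHecke algebra on m+1 strands with cyclotomic degree m is the zero algebra. -/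
namespace Stmt13

variable {R : Type} [Ring R]

/-- complete homogeneous symmetric function of degree n in variables v 0, ..., v (k-1) -/
def hpoly (v : ℕ → R) : ℕ → ℕ → R
  | 0, _ => 1
  | _+1, 0 => 0
  | n+1, k+1 => hpoly v (n+1) k + v k * hpoly v n (k+1)
termination_by n k => n + k

@[simp] lemma hpoly_zero (v : ℕ → R) (k : ℕ) : hpoly v 0 k = 1 := by rw [hpoly]

@[simp] lemma hpoly_succ_zero (v : ℕ → R) (n : ℕ) : hpoly v (n+1) 0 = 0 := by rw [hpoly]

lemma hpoly_succ (v : ℕ → R) (n k : ℕ) :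
    hpoly v (n+1) (k+1) = hpoly v (n+1) k + v k * hpoly v n (k+1) := by rw [hpoly]

lemma hpoly_succ' (v : ℕ → R) (n k : ℕ) :
    hpoly v (n+1) (k+2) = hpoly v (n+1) (k+1) + v (k+1) * hpoly v n (k+2) :=
  hpoly_succ v n (k+1)

lemma hpoly_congr (v w : ℕ → R) : ∀ n k, (∀ j, j < k → v j = w j) →
    hpoly v n k = hpoly w n k := by
  intro n
  induction n with
  | zero => intro k _; simp
  | succ n ih =>
    intro k
    induction k with
    | zero => intro _; simp
    | succ k ihk =>
      intro h
      rw [hpoly_succ, hpoly_succ, ihk (fun j hj => h j (Nat.lt_succ_of_lt hj)),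
        h k (Nat.lt_succ_self k), ih (k+1) h]

lemma hpoly_commute (v : ℕ → R) (a : R) : ∀ n k, (∀ j, j < k → a * v j = v j * a) →
    a * hpoly v n k = hpoly v n k * a := by
  intro n
  induction n with
  | zero => intro k _; simp
  | succ n ih =>
    intro k
    induction k with
    | zero => intro _; simp
    | succ k ihk =>
      intro h
      rw [hpoly_succ, mul_add, add_mul, ihk (fun j hj => h j (Nat.lt_succ_of_lt hj))]
      congr 1
      rw [← mul_assoc, h k (Nat.lt_succ_self k), mul_assoc, ih (k+1) h, ← mul_assoc]

lemma hpoly_one_var (v : ℕ → R) : ∀ n, hpoly v n 1 = v 0 ^ n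
  | 0 => by simp
  | n+1 => by
      rw [hpoly_succ, hpoly_succ_zero, hpoly_one_var v n, zero_add, pow_succ']

lemma hpoly_swap (v : ℕ → R) (k : ℕ) (hxy : v k * v (k+1) = v (k+1) * v k) :
    ∀ n, hpoly (fun j => if j = k then v (k+1) else v j) (n+1) (k+1)
      = hpoly v (n+1) (k+1) + (v (k+1) - v k) * hpoly v n (k+2) := by
  have hcg : ∀ n, hpoly (fun j => if j = k then v (k+1) else v j) n k = hpoly v n k := by
    intro n
    exact hpoly_congr _ v n k (fun j hj => by simp [Nat.ne_of_lt hj])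
  have e0 : v (k+1) * (v (k+1) - v k) = (v (k+1) - v k) * v (k+1) := by
    rw [mul_sub, sub_mul, hxy]
  intro n
  induction n with
  | zero =>
    rw [hpoly_succ, hpoly_succ, hcg, if_pos rfl, hpoly_zero, hpoly_zero, hpoly_zero]
    noncomm_ring
  | succ n ih =>
    rw [hpoly_succ, hcg, if_pos rfl, ih,
      hpoly_succ v (n+1) k, hpoly_succ' v n k]
    have e1 : v (k+1) * ((v (k+1) - v k) * hpoly v n (k+2))
        = (v (k+1) - v k) * (v (k+1) * hpoly v n (k+2)) := by
      rw [← mul_assoc, e0, mul_assoc]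
    rw [mul_add (v (k+1)), e1]
    noncomm_ring

lemma hpoly_slide (v : ℕ → R) (k : ℕ) (ψ : R)
    (hf : ∀ j, j < k → ψ * v j = v j * ψ)
    (hs : ψ * v k = v (k+1) * ψ + 1) :
    ∀ n, ψ * hpoly v (n+1) (k+1)
      = hpoly (fun j => if j = k then v (k+1) else v j) (n+1) (k+1) * ψ
        + hpoly v n (k+2) := by
  have hcg : ∀ n, hpoly (fun j => if j = k then v (k+1) else v j) n k = hpoly v n k := by
    intro n
    exact hpoly_congr _ v n k (fun j hj => by simp [Nat.ne_of_lt hj])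
  intro n
  induction n with
  | zero =>
    rw [hpoly_succ, hpoly_succ, hcg, if_pos rfl, hpoly_zero, hpoly_zero, hpoly_zero,
      mul_add, hpoly_commute v ψ 1 k hf, mul_one, mul_one, hs]
    noncomm_ring
  | succ n ih =>
    rw [hpoly_succ v (n+1) k, mul_add, hpoly_commute v ψ (n+1+1) k hf,
      ← mul_assoc, hs, add_mul, one_mul, mul_assoc, ih,
      hpoly_succ _ (n+1) k, hcg, if_pos rfl,
      hpoly_succ' v n k]
    noncomm_ring

end Stmt13

open Stmt13 in
/-- the cyclotomic nilHecke algebra on m+1 strands at level m is zero: in any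
ring with elements x₁,…,x_{m+1}, ψ₁,…,ψ_m satisfying the nilHecke relations together with
x₁^m = 0, one has 1 = 0. -/
theorem stmt_13 (R : Type) [Ring R] (m : ℕ) (x : Fin (m+1) → R) (p : Fin m → R)
    (hxx : ∀ i j, x i * x j = x j * x i)
    (hpp : ∀ i, p i * p i = 0)
    (hbr : ∀ (i : Fin m) (h : i.val + 1 < m),
      p i * p ⟨i.val + 1, h⟩ * p i = p ⟨i.val + 1, h⟩ * p i * p ⟨i.val + 1, h⟩)
    (hfar : ∀ i j : Fin m, 1 < ((i.val : ℤ) - j.val).natAbs → p i * p j = p j * p i)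
    (hslide1 : ∀ i : Fin m, p i * x i.castSucc = x i.succ * p i + 1)
    (hslide2 : ∀ i : Fin m, x i.castSucc * p i = p i * x i.succ + 1)
    (hfarx : ∀ (i : Fin m) (j : Fin (m+1)), j.val ≠ i.val → j.val ≠ i.val + 1 →
      p i * x j = x j * p i)
    (hcyc : x 0 ^ m = 0) :
    (1 : R) = 0 := by
  set X : ℕ → R := fun j => if h : j < m + 1 then x ⟨j, h⟩ else 0 with hX
  have key : ∀ k, k ≤ m → hpoly X (m - k) (k + 1) = 0 := by
    intro k
    induction k with
    | zero =>
      intro _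
      rw [Nat.sub_zero, hpoly_one_var]
      have : X 0 = x 0 := by simp [hX]
      rw [this, hcyc]
    | succ k ih =>
      intro hk1
      have hk : k < m := hk1
      have hkm : k < m + 1 := by omega
      have hk1m : k + 1 < m + 1 := by omega
      set ψ := p ⟨k, hk⟩ with hψ
      have hXk : X k = x ⟨k, hkm⟩ := by simp [hX, hkm, Nat.le_of_lt_succ hkm]
      have hXk1 : X (k+1) = x ⟨k+1, hk1m⟩ := by simp [hX, hk1m, hk]
      have hfar' : ∀ j, j < k → ψ * X j = X j * ψ := by
        intro j hj
        have hjm : j < m + 1 := by omega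
        have : X j = x ⟨j, hjm⟩ := by simp [hX, hjm, Nat.le_of_lt_succ hjm]
        rw [this]
        exact hfarx ⟨k, hk⟩ ⟨j, hjm⟩ (by simp; omega) (by simp; omega)
      have hs' : ψ * X k = X (k+1) * ψ + 1 := by
        rw [hXk, hXk1]
        have := hslide1 ⟨k, hk⟩
        simpa [Fin.castSucc_mk, Fin.succ_mk] using this
      have hxy' : X k * X (k+1) = X (k+1) * X k := by
        rw [hXk, hXk1]; exact hxx _ _
      have hmk : m - k = (m - (k+1)) + 1 := by omega
      have hIH := ih (le_of_lt hk)
      rw [hmk] at hIH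
      have hsl := hpoly_slide X k ψ hfar' hs' (m - (k+1))
      rw [hIH, mul_zero] at hsl
      have hsw := hpoly_swap X k hxy' (m - (k+1))
      rw [hIH, zero_add] at hsw
      rw [hsw] at hsl
      have hg : hpoly X (m - (k+1)) (k+2)
          = -((X (k+1) - X k) * hpoly X (m - (k+1)) (k+2) * ψ) :=
        eq_neg_of_add_eq_zero_right hsl.symm
      have hgψ : hpoly X (m - (k+1)) (k+2) * ψ = 0 := by
        rw [hg, neg_mul, mul_assoc _ ψ ψ, hψ, hpp, mul_zero, neg_zero]
      rw [hg, mul_assoc, hgψ, mul_zero, neg_zero]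
  have h1 := key m le_rfl
  rw [Nat.sub_self] at h1
  simpa using h1
end
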